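/- Let 0 < D_min ≤ D_max, let μ*, μ ∈ [0,1] with Δ' := (D_min/D_max)·μ* − μ > 0, and let t ≥ 2, n ∈ ℕ with n ≥ 1. Suppose d, d* ∈ [D_min, D_max] and d·(μ + 2√(2 log t / n)) ≥ d*·μ*. Then n ≤ 8 log t / Δ'². -/
import Mathlib


theorem suboptimal_pull_count_bound
    (Dmin Dmax : ℝ) (hDmin : 0 < Dmin) (hDD : Dmin ≤ Dmax)
    (μstar μ : ℝ) (hμstar : μstar ∈ Set.Icc (0 : ℝ) 1) (hμ : μ ∈ Set.Icc (0 : ℝ) 1)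
    (hgap : 0 < Dmin / Dmax * μstar - μ)
    (t : ℝ) (ht : 2 ≤ t) (n : ℕ) (hn : 1 ≤ n)
    (d dstar : ℝ) (hd : d ∈ Set.Icc Dmin Dmax) (hdstar : dstar ∈ Set.Icc Dmin Dmax)
    (hsel : d * (μ + 2 * Real.sqrt (2 * Real.log t / n)) ≥ dstar * μstar) :
    (n : ℝ) ≤ 8 * Real.log t / (Dmin / Dmax * μstar - μ) ^ 2 := by
  have hDmax : 0 < Dmax := lt_of_lt_of_le hDmin hDD
  have hdpos : 0 < d := lt_of_lt_of_le hDmin hd.1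
  have hnpos : (0 : ℝ) < n := by exact_mod_cast hn
  have hlog : 0 ≤ Real.log t :=
    Real.log_nonneg (by linarith)
  have harg : 0 ≤ 2 * Real.log t / n := by positivity
  have h2 : Dmin / Dmax ≤ dstar / d :=
    div_le_div₀ (le_trans hDmin.le hdstar.1) hdstar.1 hdpos hd.2
  have h3 : Dmin / Dmax * μstar ≤ dstar / d * μstar :=
    mul_le_mul_of_nonneg_right h2 hμstar.1
  have h4 : dstar / d * μstar ≤ μ + 2 * Real.sqrt (2 * Real.log t / n) := by
    rw [div_mul_eq_mul_div, div_le_iff₀ hdpos]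
    linarith [hsel]
  have h1 : Dmin / Dmax * μstar - μ ≤ 2 * Real.sqrt (2 * Real.log t / n) := by
    linarith
  have hsq : (Real.sqrt (2 * Real.log t / n)) ^ 2 = 2 * Real.log t / n :=
    Real.sq_sqrt harg
  have hΔsq : (Dmin / Dmax * μstar - μ) ^ 2 ≤ 4 * (2 * Real.log t / n) := by
    nlinarith [Real.sqrt_nonneg (2 * Real.log t / n)]
  rw [le_div_iff₀ (by positivity)]
  have hne : (n:ℝ) ≠ 0 := ne_of_gt hnpos
  have h5 : (Dmin / Dmax * μstar - μ) ^ 2 * n ≤ 4 * (2 * Real.log t / n) * n :=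
    mul_le_mul_of_nonneg_right hΔsq hnpos.le
  have h6 : 4 * (2 * Real.log t / n) * (n:ℝ) = 8 * Real.log t := by
    field_simp; ring
  linarith [h5, h6.le, h6.ge]
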